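/- arXiv:2301.13737 — 4 statements merged into one kernel-verified Lean document; each statement's English description precedes it below -/
import Mathlib

section
/- Let p : ℝ^d → ℝ be a continuously differentiable probability density with p(x) > 0 for every x ∈ ℝ^d. Let v, b : ℝ^d → ℝ^d be continuously differentiable with v bounded, and let D : ℝ^d → ℝ^{d×d} be a bounded continuously differentiable matrix-valued map. Assume the vector field F(x) := p(x) D(x)ᵀ v(x) is integrable, its divergence div F is integrable, F(x) → 0 as ‖x‖ → ∞, and the functions x ↦ v(x)ᵀ b(x) p(x), x ↦ v(x)ᵀ D(x) ∇log p(x) p(x), and x ↦ div(D(x)ᵀ v(x)) p(x) are integrable. Then ∫_{ℝ^d} v(x)ᵀ (b(x) − D(x) ∇log p(x)) p(x) dx = ∫_{ℝ^d} [ v(x)ᵀ b(x) + div(D(x)ᵀ v(x)) ] p(x) dx. -/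
open MeasureTheory Filter

/-- Divergence of a vector field on `ℝ^d`: the sum of the partial derivatives
`∂F_i/∂x_i`, i.e. the trace of the Jacobian. -/
noncomputable def vdiv {d : ℕ} (F : (Fin d → ℝ) → (Fin d → ℝ)) (x : Fin d → ℝ) : ℝ :=
  ∑ i, fderiv ℝ F x (Pi.single i 1) i

/-- The `i`-th component of the gradient of a scalar function on `ℝ^d`. -/
noncomputable def grad {d : ℕ} (p : (Fin d → ℝ) → ℝ) (x : Fin d → ℝ) (i : Fin d) : ℝ :=
  fderiv ℝ p x (Pi.single i 1)

open Set in
/-- Whole-space divergence theorem: if a `C¹` vector field and its divergence are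
integrable, then the integral of the divergence vanishes. -/
lemma integral_vdiv_eq_zero_succ {n : ℕ} (F : (Fin (n + 1) → ℝ) → (Fin (n + 1) → ℝ))
    (hF : ContDiff ℝ 1 F) (hFi : Integrable F)
    (hdi : Integrable (fun x => vdiv F x)) :
    ∫ x, vdiv F x = 0 := by
  by_contra hL
  set L := ∫ x, vdiv F x with hLdef
  set φ : ℝ → ℝ := fun R =>
    ∫ x in Icc (fun _ : Fin (n + 1) => -R) (fun _ => R), vdiv F x with hφdef
  have hU : (⋃ R : ℝ, Icc (fun _ : Fin (n + 1) => -R) (fun _ => R)) = univ := by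
    refine eq_univ_of_forall fun x => mem_iUnion.2 ⟨‖x‖, fun i => ?_, fun i => ?_⟩
    · have h := norm_le_pi_norm x i
      rw [Real.norm_eq_abs] at h
      show -‖x‖ ≤ x i
      linarith [(abs_le.mp h).1]
    · have h := norm_le_pi_norm x i
      rw [Real.norm_eq_abs] at h
      show x i ≤ ‖x‖
      linarith [(abs_le.mp h).2]
  have hmono : Monotone fun R : ℝ => Icc (fun _ : Fin (n + 1) => -R) (fun _ => R) :=
    fun R R' h => Icc_subset_Icc (fun i => by dsimp; linarith) fun i => by dsimp; linarith
  have hphi : Tendsto φ atTop (nhds L) := by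
    have h := tendsto_setIntegral_of_monotone (μ := volume)
      (f := fun x => vdiv F x) (fun R : ℝ => measurableSet_Icc) hmono
      (by rw [hU]; exact hdi.integrableOn)
    rw [hU, setIntegral_univ] at h
    exact h
  -- divergence theorem on boxes
  have hface : ∀ R : ℝ, 0 ≤ R → φ R = ∑ i : Fin (n + 1),
      ((∫ y in Icc (fun _ : Fin n => -R) (fun _ => R), F (i.insertNth R y) i) -
        ∫ y in Icc (fun _ : Fin n => -R) (fun _ => R), F (i.insertNth (-R) y) i) := by
    intro R hR
    have hle : (fun _ : Fin (n + 1) => -R) ≤ fun _ => R := fun i => by dsimp; linarith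
    have h := integral_divergence_of_hasFDerivAt_off_countable
      (a := fun _ => -R) (b := fun _ => R) hle F (fun x => fderiv ℝ F x) ∅
      countable_empty hF.continuous.continuousOn
      (fun x _ => (hF.differentiable one_ne_zero x).hasFDerivAt)
      hdi.integrableOn
    exact h
  -- slice integrability via Fubini
  have hsl : ∀ i : Fin (n + 1),
      Integrable (fun q : ℝ × (Fin n → ℝ) => F (i.insertNth q.1 q.2)) := by
    intro i
    have hmp := (MeasureTheory.volume_preserving_piFinSuccAbove
      (fun _ : Fin (n + 1) => ℝ) i).symm
    have hemb := (MeasurableEquiv.piFinSuccAbove (fun _ : Fin (n + 1) => ℝ) i).symm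
      |>.measurableEmbedding
    have := (hmp.integrable_comp_emb hemb).mpr hFi
    exact this
  have hg1 : ∀ i : Fin (n + 1),
      Integrable (fun t : ℝ => ∫ y, ‖F (i.insertNth t y)‖) := fun i =>
    (hsl i).integral_norm_prod_left
  have hg2 : ∀ i : Fin (n + 1),
      Integrable (fun t : ℝ => ∫ y, ‖F (i.insertNth (-t) y)‖) := by
    intro i
    have hmp := Measure.measurePreserving_neg (volume : Measure ℝ)
    have hemb : MeasurableEmbedding (fun t : ℝ => -t) :=
      (Homeomorph.neg ℝ).measurableEmbedding
    exact (hmp.integrable_comp_emb hemb).mpr (hg1 i)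
  set g : ℝ → ℝ := fun R => ∑ i : Fin (n + 1),
    ((∫ y, ‖F (i.insertNth R y)‖) + ∫ y, ‖F (i.insertNth (-R) y)‖) with hgdef
  have hgint : Integrable g := integrable_finset_sum _ fun i _ => (hg1 i).add (hg2 i)
  -- a.e. the slices are integrable
  have hae : ∀ᵐ t : ℝ, ∀ i : Fin (n + 1),
      Integrable (fun y => F (i.insertNth t y)) := by
    rw [MeasureTheory.ae_all_iff]
    intro i
    have h := (hsl i).prod_right_ae (μ := (volume : Measure ℝ))
    · exact h
  have haen : ∀ᵐ t : ℝ, ∀ i : Fin (n + 1),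
      Integrable (fun y => F (i.insertNth (-t) y)) := by
    have hq : Measure.QuasiMeasurePreserving (fun t : ℝ => -t) volume volume :=
      (Measure.measurePreserving_neg (volume : Measure ℝ)).quasiMeasurePreserving
    exact hq.ae hae
  -- bound |φ R| ≤ g R for a.e. R ≥ 0
  have hbound : ∀ᵐ t : ℝ, 0 ≤ t → |φ t| ≤ g t := by
    filter_upwards [hae, haen] with t h1 h2 ht
    rw [hface t ht]
    refine le_trans (Finset.abs_sum_le_sum_abs _ _) (Finset.sum_le_sum fun i _ => ?_)
    have key : ∀ (c : ℝ), Integrable (fun y => F (i.insertNth c y)) →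
        |∫ y in Icc (fun _ : Fin n => -t) (fun _ => t), F (i.insertNth c y) i|
          ≤ ∫ y, ‖F (i.insertNth c y)‖ := by
      intro c hc
      calc |∫ y in Icc (fun _ : Fin n => -t) (fun _ => t), F (i.insertNth c y) i|
          ≤ ∫ y in Icc (fun _ : Fin n => -t) (fun _ => t), |F (i.insertNth c y) i| := by
            rw [← Real.norm_eq_abs]
            simpa [Real.norm_eq_abs] using
              norm_integral_le_integral_norm (μ := volume.restrict (Set.Icc (fun _ : Fin n => -t) (fun _ => t))) (fun y => F (i.insertNth c y) i)
        _ ≤ ∫ y in Icc (fun _ : Fin n => -t) (fun _ => t), ‖F (i.insertNth c y)‖ := by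
            refine integral_mono_of_nonneg (Filter.Eventually.of_forall fun y => abs_nonneg _)
              hc.norm.integrableOn (Filter.Eventually.of_forall fun y => ?_)
            simpa [Real.norm_eq_abs] using norm_le_pi_norm (F (i.insertNth c y)) i
        _ ≤ ∫ y, ‖F (i.insertNth c y)‖ :=
            setIntegral_le_integral hc.norm (Filter.Eventually.of_forall fun y => norm_nonneg _)
    calc |(∫ y in Icc (fun _ : Fin n => -t) (fun _ => t), F (i.insertNth t y) i) -
          ∫ y in Icc (fun _ : Fin n => -t) (fun _ => t), F (i.insertNth (-t) y) i|
        ≤ |∫ y in Icc (fun _ : Fin n => -t) (fun _ => t), F (i.insertNth t y) i| +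
          |∫ y in Icc (fun _ : Fin n => -t) (fun _ => t), F (i.insertNth (-t) y) i| :=
          abs_sub _ _
      _ ≤ (∫ y, ‖F (i.insertNth t y)‖) + ∫ y, ‖F (i.insertNth (-t) y)‖ :=
          add_le_add (key t (h1 i)) (key (-t) (h2 i))
  -- eventually |φ R| ≥ |L|/2
  have hev : ∀ᶠ R : ℝ in atTop, |L| / 2 ≤ |φ R| := by
    have h : ∀ᶠ R : ℝ in atTop, |φ R - L| < |L| / 2 := by
      have := hphi.sub_const L
      rw [sub_self] at this
      have h2 : Tendsto (fun R => |φ R - L|) atTop (nhds |(0 : ℝ)|) := this.abs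
      rw [abs_zero] at h2
      exact h2.eventually_lt_const (by positivity)
    filter_upwards [h] with R hR
    have := abs_sub_abs_le_abs_sub (φ R) L
    have h3 := abs_sub_comm (φ R) L
    nlinarith [abs_sub_abs_le_abs_sub L (φ R), abs_nonneg (φ R - L)]
  obtain ⟨R₁, hR₁⟩ := eventually_atTop.mp hev
  set R₀ := max R₁ 0 with hR₀def
  -- const |L|/2 is integrable on Ioi R₀, contradiction with infinite measure
  have hconst : IntegrableOn (fun _ : ℝ => |L| / 2) (Set.Ioi R₀) := by
    refine Integrable.mono' hgint.integrableOn aestronglyMeasurable_const ?_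
    have h1 := ae_restrict_of_ae (μ := (volume : Measure ℝ)) (s := Set.Ioi R₀) hbound
    filter_upwards [h1, ae_restrict_mem (measurableSet_Ioi (a := R₀))] with t hbt htm
    have ht0 : (0 : ℝ) ≤ t := le_trans (le_max_right _ _) (le_of_lt htm)
    have ht1 : R₁ ≤ t := le_trans (le_max_left _ _) (le_of_lt htm)
    have := le_trans (hR₁ t ht1) (hbt ht0)
    rw [Real.norm_eq_abs, abs_of_nonneg (by positivity : (0:ℝ) ≤ |L| / 2)]
    exact this
  have hne : |L| / 2 ≠ 0 := by
    simp only [ne_eq, div_eq_zero_iff, abs_eq_zero]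
    push_neg
    exact ⟨hL, by norm_num⟩
  have := (integrable_const_iff (c := |L| / 2)).mp hconst
  rcases this with h | h
  · exact hne h
  · rw [isFiniteMeasure_restrict, Real.volume_Ioi] at h
    exact h rfl

/-- **Integration by parts for the Fokker–Planck velocity field** (Proposition 1):
`∫ vᵀ (b − D ∇log p) p = ∫ (vᵀ b + div(Dᵀ v)) p`. -/
theorem fokker_planck_integration_by_parts {d : ℕ}
    (p : (Fin d → ℝ) → ℝ) (v b : (Fin d → ℝ) → (Fin d → ℝ))
    (D : (Fin d → ℝ) → Matrix (Fin d) (Fin d) ℝ)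
    -- `p` is a continuously differentiable probability density, positive everywhere
    (hp : ContDiff ℝ 1 p) (hppos : ∀ x, 0 < p x) (hpprob : ∫ x, p x = 1)
    -- `v`, `b` continuously differentiable, `v` bounded
    (hv : ContDiff ℝ 1 v) (hb : ContDiff ℝ 1 b) (hvbd : ∃ M, ∀ x, ‖v x‖ ≤ M)
    -- `D` bounded and continuously differentiable (entrywise)
    (hD : ∀ i j, ContDiff ℝ 1 fun x => D x i j)
    (hDbd : ∃ M, ∀ x i j, |D x i j| ≤ M)
    -- the score `s = ∇log p = ∇p / p`
    (s : (Fin d → ℝ) → (Fin d → ℝ)) (hs : ∀ x i, s x i = grad p x i / p x)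
    -- the vector field `F(x) = p(x) D(x)ᵀ v(x)`
    (F : (Fin d → ℝ) → (Fin d → ℝ))
    (hF : ∀ x i, F x i = p x * ∑ j, D x j i * v x j)
    -- `F` integrable, `div F` integrable, `F → 0` at infinity
    (hFint : Integrable F) (hdivFint : Integrable fun x => vdiv F x)
    (hFzero : Tendsto F (cocompact (Fin d → ℝ)) (nhds 0))
    -- integrability of the three integrands
    (hint1 : Integrable fun x => (∑ i, v x i * b x i) * p x)
    (hint2 : Integrable fun x => (∑ i, v x i * ∑ j, D x i j * s x j) * p x)
    (hint3 : Integrable fun x => vdiv (fun y i => ∑ j, D y j i * v y j) x * p x) :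
    ∫ x, (∑ i, v x i * (b x i - ∑ j, D x i j * s x j)) * p x
      = ∫ x, ((∑ i, v x i * b x i) + vdiv (fun y i => ∑ j, D y j i * v y j) x) * p x := by
  set G : (Fin d → ℝ) → (Fin d → ℝ) := fun y i => ∑ j, D y j i * v y j with hGdef
  have hvc : ∀ j, ContDiff ℝ 1 fun x => v x j := fun j => (contDiff_pi.mp hv) j
  have hGc : ∀ i, ContDiff ℝ 1 fun y => G y i := fun i =>
    ContDiff.sum fun j _ => (hD j i).mul (hvc j)
  have hFeq : F = fun x i => p x * G x i := by
    funext x i; exact hF x i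
  have hFc : ContDiff ℝ 1 F := by
    rw [hFeq]; exact contDiff_pi.mpr fun i => hp.mul (hGc i)
  -- pointwise product rule
  have key : ∀ x, vdiv F x =
      (∑ i, v x i * ∑ j, D x i j * s x j) * p x + vdiv G x * p x := by
    intro x
    have hdF : ∀ i, DifferentiableAt ℝ (fun y => F y i) x := fun i => by
      rw [hFeq]; exact ((hp.mul (hGc i)).differentiable one_ne_zero).differentiableAt
    have hdG : ∀ i, DifferentiableAt ℝ (fun y => G y i) x := fun i =>
      ((hGc i).differentiable one_ne_zero).differentiableAt
    have hdp : DifferentiableAt ℝ p x := (hp.differentiable one_ne_zero).differentiableAt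
    have hFcomp : ∀ u i, fderiv ℝ F x u i = fderiv ℝ (fun y => F y i) x u := by
      intro u i
      rw [show F = fun x i => (fun y => F y i) x from rfl, fderiv_pi hdF]
      rfl
    have hGcomp : ∀ u i, fderiv ℝ G x u i = fderiv ℝ (fun y => G y i) x u := by
      intro u i
      rw [show G = fun x i => (fun y => G y i) x from rfl, fderiv_pi hdG]
      rfl
    have hcomp : ∀ i : Fin d, fderiv ℝ (fun y => F y i) x (Pi.single i 1)
        = p x * fderiv ℝ (fun y => G y i) x (Pi.single i 1) + G x i * grad p x i := by
      intro i
      have : (fun y => F y i) = fun y => p y * G y i := by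
        funext y; exact hF y i
      rw [this, fderiv_fun_mul hdp (hdG i)]
      simp only [ContinuousLinearMap.add_apply, ContinuousLinearMap.smul_apply,
        smul_eq_mul, grad]
    have hgs : ∀ i, grad p x i = p x * s x i := by
      intro i
      rw [hs x i]
      field_simp [(hppos x).ne']
    calc vdiv F x = ∑ i, fderiv ℝ (fun y => F y i) x (Pi.single i 1) := by
          unfold vdiv; exact Finset.sum_congr rfl fun i _ => hFcomp _ i
      _ = ∑ i, (p x * fderiv ℝ (fun y => G y i) x (Pi.single i 1) + G x i * grad p x i) :=
          Finset.sum_congr rfl fun i _ => hcomp i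
      _ = p x * vdiv G x + ∑ i, G x i * (p x * s x i) := by
          have e1 : ∑ i, fderiv ℝ (fun y => G y i) x (Pi.single i 1) = vdiv G x := by
            unfold vdiv
            exact Finset.sum_congr rfl fun i _ => (hGcomp _ i).symm
          rw [Finset.sum_add_distrib, ← Finset.mul_sum, e1]
          simp only [hgs]
      _ = (∑ i, v x i * ∑ j, D x i j * s x j) * p x + vdiv G x * p x := by
          have hswap : ∑ i, G x i * (p x * s x i)
              = (∑ i, v x i * ∑ j, D x i j * s x j) * p x := by
            simp only [hGdef, Finset.sum_mul, Finset.mul_sum]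
            rw [Finset.sum_comm]
            exact Finset.sum_congr rfl fun i _ => Finset.sum_congr rfl fun j _ => by ring
          rw [hswap]
          ring
  -- ∫ vdiv F = 0
  have hzero : ∫ x, vdiv F x = 0 := by
    cases d with
    | zero => simp [vdiv]
    | succ n => exact integral_vdiv_eq_zero_succ F hFc hFint hdivFint
  -- assemble
  have hsplit : (fun x => (∑ i, v x i * (b x i - ∑ j, D x i j * s x j)) * p x)
      = fun x => (∑ i, v x i * b x i) * p x - (∑ i, v x i * ∑ j, D x i j * s x j) * p x := by
    funext x
    simp only [mul_sub, Finset.sum_sub_distrib, sub_mul]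
  have hsum : ∫ x, ((∑ i, v x i * ∑ j, D x i j * s x j) * p x + vdiv G x * p x) = 0 := by
    rw [← hzero]
    exact integral_congr_ae (Filter.Eventually.of_forall fun x => (key x).symm)
  rw [integral_add hint2 hint3] at hsum
  rw [hsplit, integral_sub hint1 hint2]
  have hrhs : (fun x => ((∑ i, v x i * b x i) + vdiv G x) * p x)
      = fun x => (∑ i, v x i * b x i) * p x + vdiv G x * p x := by
    funext x; ring
  rw [hrhs, integral_add hint1 hint3]
  linarith
end

section
/- Let p : ℝ^d → ℝ be a continuously differentiable probability density with p(x) > 0 for every x, and let v : ℝ^d → ℝ^d be a bounded continuously differentiable vector field. Assume the vector field F(x) := p(x) v(x) is integrable, div F is integrable, F(x) → 0 as ‖x‖ → ∞, and both x ↦ v(x)·∇log p(x) · p(x) and x ↦ div v(x) · p(x) are integrable. Then ∫_{ℝ^d} v(x)·∇log p(x) · p(x) dx = − ∫_{ℝ^d} div v(x) · p(x) dx. -/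
open MeasureTheory Filter

private theorem integral_vdiv_eq_zero' {d : ℕ} (F : (Fin d → ℝ) → (Fin d → ℝ))
    (hF : ContDiff ℝ 1 F) (hFint : Integrable F)
    (hdiv : Integrable fun x => vdiv F x) : ∫ x, vdiv F x = 0 := by
  cases d with
  | zero => simp [vdiv]
  | succ n =>
    -- the sliced L¹ mass at level t in direction i
    set ν : Fin (n + 1) → ℝ → ENNReal :=
      fun i t => ∫⁻ y : Fin n → ℝ, ‖F (i.insertNth t y)‖₊ with hνdef
    have hins : ∀ i : Fin (n + 1),
        Measurable fun z : ℝ × (Fin n → ℝ) => (i.insertNth z.1 z.2 : Fin (n + 1) → ℝ) := by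
      intro i
      have := (MeasurableEquiv.piFinSuccAbove (fun _ : Fin (n + 1) => ℝ) i).symm.measurable
      exact this
    have hmeas : ∀ i : Fin (n + 1),
        Measurable fun z : ℝ × (Fin n → ℝ) => (‖F (i.insertNth z.1 z.2)‖₊ : ENNReal) :=
      fun i => (hF.continuous.measurable.comp (hins i)).nnnorm.coe_nnreal_ennreal
    have hνtot : ∀ i, (∫⁻ t, ν i t) = ∫⁻ x, ‖F x‖₊ := by
      intro i
      have hmp : MeasurePreserving
          (MeasurableEquiv.piFinSuccAbove (fun _ : Fin (n + 1) => ℝ) i).symm volume volume :=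
        (volume_preserving_piFinSuccAbove (fun _ : Fin (n + 1) => ℝ) i).symm _
      calc (∫⁻ t, ν i t)
          = ∫⁻ z : ℝ × (Fin n → ℝ), ‖F (i.insertNth z.1 z.2)‖₊ := by
            rw [Measure.volume_eq_prod, lintegral_prod _ (hmeas i).aemeasurable]
        _ = ∫⁻ x, ‖F x‖₊ := by
            have := hmp.lintegral_comp hF.continuous.measurable.nnnorm.coe_nnreal_ennreal
            exact this
    have hνmeas : ∀ i, Measurable (ν i) := fun i => (hmeas i).lintegral_prod_right'
    -- total boundary mass function
    set G : ℝ → ENNReal := fun t => ∑ i : Fin (n + 1), (ν i t + ν i (-t)) with hGdef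
    have hGmeas : Measurable G :=
      Finset.measurable_sum _ fun i _ =>
        (hνmeas i).add ((hνmeas i).comp measurable_neg)
    have hGfin : (∫⁻ t, G t) ≠ ⊤ := by
      have hneg : ∀ i, (∫⁻ t, ν i (-t)) = ∫⁻ t, ν i t :=
        fun i => (Measure.measurePreserving_neg (volume : Measure ℝ)).lintegral_comp (hνmeas i)
      have hsum : (∫⁻ t, G t) = ∑ i : Fin (n + 1), ∫⁻ t, (ν i t + ν i (-t)) := by
        simp only [hGdef]
        exact lintegral_finset_sum _ fun i _ =>
          ((hνmeas i).add ((hνmeas i).comp measurable_neg))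
      rw [hsum]
      refine (ne_of_lt ?_)
      refine ENNReal.sum_lt_top.mpr fun i _ => ?_
      rw [lintegral_add_left (hνmeas i), hneg i, hνtot i]
      have := hFint.hasFiniteIntegral
      rw [HasFiniteIntegral] at this
      exact ENNReal.add_lt_top.mpr ⟨this, this⟩
    -- arbitrarily large t with small G
    have hsmall : ∀ (T : ℝ) (ε : ENNReal), 0 < ε → ∃ t, T < t ∧ G t < ε := by
      intro T ε hε
      by_contra h
      push_neg at h
      have htop : (∫⁻ t in Set.Ioi T, G t) = ⊤ := by
        have h1 : ∫⁻ _ in Set.Ioi T, ε ≤ ∫⁻ t in Set.Ioi T, G t :=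
          setLIntegral_mono' measurableSet_Ioi fun t ht => h t ht
        rw [setLIntegral_const, Real.volume_Ioi, ENNReal.mul_top hε.ne'] at h1
        exact top_le_iff.mp h1
      exact hGfin (top_le_iff.mp (htop ▸ setLIntegral_le_lintegral _ _))
    -- the sequence of radii
    have hex : ∀ (k : ℕ) (T : ℝ), ∃ t, T < t ∧ G t < 1 / ((k : ENNReal) + 1) :=
      fun k T => hsmall T _ (ENNReal.div_pos one_ne_zero (by simp))
    choose R' hR'gt hR'G using hex
    set R : ℕ → ℝ := fun k => Nat.rec (motive := fun _ => ℝ) (R' 0 0) (fun k r => R' (k + 1) (max r ((k : ℝ) + 1))) k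
      with hRdef
    have hR0 : R 0 = R' 0 0 := rfl
    have hRsucc : ∀ k, R (k + 1) = R' (k + 1) (max (R k) ((k : ℝ) + 1)) := fun k => rfl
    have hRmono : StrictMono R := by
      apply strictMono_nat_of_lt_succ
      intro k
      rw [hRsucc]
      exact lt_of_le_of_lt (le_max_left _ _) (hR'gt _ _)
    have hRgt : ∀ k : ℕ, (k : ℝ) < R k := by
      intro k
      cases k with
      | zero => simpa [hR0] using hR'gt 0 0
      | succ m =>
        rw [hRsucc]
        refine lt_of_le_of_lt ?_ (hR'gt _ _)
        push_cast
        exact le_max_right _ _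
    have hRpos : ∀ k, 0 < R k := fun k => lt_of_le_of_lt (Nat.cast_nonneg k) (hRgt k)
    have hRG : ∀ k, G (R k) < 1 / ((k : ENNReal) + 1) := by
      intro k
      cases k with
      | zero => exact hR'G 0 0
      | succ m => rw [hRsucc]; exact hR'G _ _
    -- the boxes
    set S : ℕ → Set (Fin (n + 1) → ℝ) :=
      fun k => Set.Icc (fun _ => -R k) (fun _ => R k) with hSdef
    have hSmono : Monotone S := by
      intro k l hkl
      apply Set.Icc_subset_Icc
      · intro i; simp only; linarith [hRmono.le_iff_le.mpr hkl]
      · intro i; simp only; exact hRmono.le_iff_le.mpr hkl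
    have hSunion : (⋃ k, S k) = Set.univ := by
      ext x
      simp only [Set.mem_iUnion, Set.mem_univ, iff_true, hSdef, Set.mem_Icc]
      obtain ⟨k, hk⟩ := exists_nat_gt ‖x‖
      have hxk : ∀ i, |x i| ≤ R k := by
        intro i
        have h1 := norm_le_pi_norm x i
        simp only [Real.norm_eq_abs] at h1
        linarith [hRgt k]
      exact ⟨k, fun i => by simpa using (abs_le.mp (hxk i)).1,
        fun i => by simpa using (abs_le.mp (hxk i)).2⟩
    -- divergence theorem on each box
    have hdivthm : ∀ k, (∫ x in S k, vdiv F x) =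
        ∑ i : Fin (n + 1),
          ((∫ x in Set.Icc ((fun _ : Fin (n + 1) => -R k) ∘ i.succAbove)
              ((fun _ : Fin (n + 1) => R k) ∘ i.succAbove), F (i.insertNth (R k) x) i) -
            ∫ x in Set.Icc ((fun _ : Fin (n + 1) => -R k) ∘ i.succAbove)
              ((fun _ : Fin (n + 1) => R k) ∘ i.succAbove), F (i.insertNth (-R k) x) i) := by
      intro k
      have hle : (fun _ : Fin (n + 1) => -R k) ≤ fun _ => R k := fun i => by
        simp only; linarith [hRpos k]
      exact MeasureTheory.integral_divergence_of_hasFDerivAt_off_countable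
        (a := fun _ => -R k) (b := fun _ => R k) hle F (fderiv ℝ F) ∅ Set.countable_empty
        hF.continuous.continuousOn
        (fun x _ => (hF.differentiable one_ne_zero x).hasFDerivAt)
        hdiv.integrableOn
    -- the boundary bound
    have hface : ∀ (i : Fin (n + 1)) (t : ℝ) (Q : Set (Fin n → ℝ)), ν i t ≠ ⊤ →
        ‖∫ x in Q, F (i.insertNth t x) i‖ ≤ (ν i t).toReal := by
      intro i t Q hfin
      have hcont : Continuous fun x : Fin n → ℝ => F (i.insertNth t x) :=
        hF.continuous.comp (continuous_const.finInsertNth i continuous_id)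
      have hm : AEStronglyMeasurable (fun x : Fin n → ℝ => ‖F (i.insertNth t x) i‖)
          (volume.restrict Q) :=
        (((continuous_apply i).comp hcont).norm).aestronglyMeasurable.restrict
      calc ‖∫ x in Q, F (i.insertNth t x) i‖
          ≤ ∫ x in Q, ‖F (i.insertNth t x) i‖ := norm_integral_le_integral_norm _
        _ = (∫⁻ x in Q, ENNReal.ofReal ‖F (i.insertNth t x) i‖).toReal :=
            integral_eq_lintegral_of_nonneg_ae
              (Filter.Eventually.of_forall fun x => norm_nonneg _) hm
        _ ≤ (ν i t).toReal := by
            apply ENNReal.toReal_mono hfin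
            refine le_trans (lintegral_mono fun x => ?_) (setLIntegral_le_lintegral _ _)
            rw [← ENNReal.ofReal_coe_nnreal, coe_nnnorm]
            exact ENNReal.ofReal_le_ofReal (norm_le_pi_norm (F (i.insertNth t x)) i)
    -- boundary terms tend to zero
    have hbd : Tendsto (fun k => ∫ x in S k, vdiv F x) atTop (nhds 0) := by
      have hb : ∀ k, ‖∫ x in S k, vdiv F x‖ ≤ (2 * (n + 1)) * (1 / ((k : ℝ) + 1)) := by
        intro k
        have h1top : (1 : ENNReal) / ((k : ENNReal) + 1) ≠ ⊤ := by simp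
        have hνle : ∀ (i : Fin (n + 1)) (t : ℝ), (ν i t + ν i (-t)) ≤ G (R k) →
            (ν i t).toReal ≤ 1 / ((k : ℝ) + 1) ∧ (ν i (-t)).toReal ≤ 1 / ((k : ℝ) + 1) := by
          intro i t hle
          have h1 : ν i t ≤ 1 / ((k : ENNReal) + 1) :=
            le_of_lt (lt_of_le_of_lt (le_trans le_self_add hle) (hRG k))
          have h2 : ν i (-t) ≤ 1 / ((k : ENNReal) + 1) :=
            le_of_lt (lt_of_le_of_lt (le_trans le_add_self hle) (hRG k))
          have htr : ((1 : ENNReal) / ((k : ENNReal) + 1)).toReal = 1 / ((k : ℝ) + 1) := by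
            rw [ENNReal.toReal_div,
              ENNReal.toReal_add (ENNReal.natCast_ne_top k) ENNReal.one_ne_top,
              ENNReal.toReal_natCast, ENNReal.toReal_one]
          constructor
          · rw [← htr]; exact ENNReal.toReal_mono h1top h1
          · rw [← htr]; exact ENNReal.toReal_mono h1top h2
        have hmem : ∀ i : Fin (n + 1), (ν i (R k) + ν i (-R k)) ≤ G (R k) := by
          intro i
          exact Finset.single_le_sum (f := fun j => ν j (R k) + ν j (-R k))
            (fun _ _ => zero_le) (Finset.mem_univ i)
        have hfin : ∀ (i : Fin (n + 1)) (t : ℝ), ν i t ≤ 1 / ((k : ENNReal) + 1) → ν i t ≠ ⊤ :=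
          fun i t h => ne_top_of_le_ne_top h1top h
        rw [hdivthm k]
        calc ‖∑ i : Fin (n + 1),
              ((∫ x in Set.Icc ((fun _ : Fin (n + 1) => -R k) ∘ i.succAbove)
                  ((fun _ : Fin (n + 1) => R k) ∘ i.succAbove), F (i.insertNth (R k) x) i) -
                ∫ x in Set.Icc ((fun _ : Fin (n + 1) => -R k) ∘ i.succAbove)
                  ((fun _ : Fin (n + 1) => R k) ∘ i.succAbove), F (i.insertNth (-R k) x) i)‖
            ≤ ∑ i : Fin (n + 1), (1 / ((k : ℝ) + 1) + 1 / ((k : ℝ) + 1)) := by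
              refine le_trans (norm_sum_le _ _) (Finset.sum_le_sum fun i _ => ?_)
              refine le_trans (norm_sub_le _ _) (add_le_add ?_ ?_)
              · refine le_trans (hface i (R k) _ ?_) (hνle i (R k) (hmem i)).1
                exact hfin i (R k)
                  (le_of_lt (lt_of_le_of_lt (le_trans le_self_add (hmem i)) (hRG k)))
              · refine le_trans (hface i (-R k) _ ?_) (hνle i (R k) (hmem i)).2
                exact hfin i (-R k)
                  (le_of_lt (lt_of_le_of_lt (le_trans le_add_self (hmem i)) (hRG k)))
          _ = (2 * (n + 1)) * (1 / ((k : ℝ) + 1)) := by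
              rw [Finset.sum_const, Finset.card_univ, Fintype.card_fin]
              push_cast
              ring
      have hg : Tendsto (fun k : ℕ => (2 * (n + 1 : ℝ)) * (1 / ((k : ℝ) + 1))) atTop (nhds 0) := by
        have := tendsto_one_div_add_atTop_nhds_zero_nat (𝕜 := ℝ)
        have h2 := this.const_mul (2 * (n + 1 : ℝ))
        simpa using h2
      exact squeeze_zero_norm hb hg
    have h1 : Tendsto (fun k => ∫ x in S k, vdiv F x) atTop (nhds (∫ x, vdiv F x)) := by
      have := tendsto_setIntegral_of_monotone (fun k => measurableSet_Icc) hSmono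
        (by rw [hSunion]; exact hdiv.integrableOn)
      rwa [hSunion, setIntegral_univ] at this
    exact tendsto_nhds_unique h1 hbd

/-- **Score-matching integration-by-parts trick**:
`∫ v·∇log p · p = −∫ (div v) p` (the case `D = I` of Proposition 1). -/
theorem score_integration_by_parts {d : ℕ}
    (p : (Fin d → ℝ) → ℝ) (v : (Fin d → ℝ) → (Fin d → ℝ))
    -- `p` is a continuously differentiable probability density, positive everywhere
    (hp : ContDiff ℝ 1 p) (hppos : ∀ x, 0 < p x) (hpprob : ∫ x, p x = 1)
    -- `v` bounded and continuously differentiable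
    (hv : ContDiff ℝ 1 v) (hvbd : ∃ M, ∀ x, ‖v x‖ ≤ M)
    -- the score `s = ∇log p = ∇p / p`
    (s : (Fin d → ℝ) → (Fin d → ℝ)) (hs : ∀ x i, s x i = grad p x i / p x)
    -- `F(x) = p(x) v(x)` integrable, `div F` integrable, `F → 0` at infinity
    (hFint : Integrable fun x => p x • v x)
    (hdivFint : Integrable fun x => vdiv (fun y => p y • v y) x)
    (hFzero : Tendsto (fun x => p x • v x) (cocompact (Fin d → ℝ)) (nhds 0))
    -- integrability of both integrands
    (hint1 : Integrable fun x => (∑ i, v x i * s x i) * p x)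
    (hint2 : Integrable fun x => vdiv v x * p x) :
    ∫ x, (∑ i, v x i * s x i) * p x = - ∫ x, vdiv v x * p x := by
  have hFc : ContDiff ℝ 1 (fun x => p x • v x) := hp.smul hv
  have hzero : ∫ x, vdiv (fun y => p y • v y) x = 0 :=
    integral_vdiv_eq_zero' _ hFc hFint hdivFint
  have hptws : ∀ x, vdiv (fun y => p y • v y) x
      = (∑ i, v x i * s x i) * p x + vdiv v x * p x := by
    intro x
    have hfd : fderiv ℝ (fun y => p y • v y) x
        = p x • fderiv ℝ v x + (fderiv ℝ p x).smulRight (v x) :=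
      fderiv_fun_smul (hp.differentiable one_ne_zero x) (hv.differentiable one_ne_zero x)
    have hterm : ∀ i, v x i * s x i * p x = fderiv ℝ p x (Pi.single i 1) * v x i := by
      intro i
      rw [hs x i, grad]
      field_simp [(hppos x).ne']
    calc vdiv (fun y => p y • v y) x
        = ∑ i, (p x * fderiv ℝ v x (Pi.single i 1) i
            + fderiv ℝ p x (Pi.single i 1) * v x i) := by
          unfold vdiv
          refine Finset.sum_congr rfl fun i _ => ?_
          rw [hfd]
          simp [ContinuousLinearMap.add_apply, ContinuousLinearMap.smul_apply,
            ContinuousLinearMap.smulRight_apply, Pi.add_apply, Pi.smul_apply, smul_eq_mul]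
      _ = (∑ i, v x i * s x i) * p x + vdiv v x * p x := by
          rw [Finset.sum_add_distrib, Finset.sum_mul]
          unfold vdiv
          rw [Finset.sum_mul]
          rw [add_comm]
          congr 1
          · exact Finset.sum_congr rfl fun i _ => (hterm i).symm
          · exact Finset.sum_congr rfl fun i _ => mul_comm _ _
  have hsum : (∫ x, (∑ i, v x i * s x i) * p x) + ∫ x, vdiv v x * p x = 0 := by
    rw [← integral_add hint1 hint2, ← hzero]
    exact integral_congr_ae (Filter.Eventually.of_forall fun x => (hptws x).symm)
  linarith
end

section
/- Let T > 0, let p : [0,T] × ℝ^d → ℝ be continuously differentiable with p(t,x) > 0 for all (t,x), and let v : [0,T] × ℝ^d → ℝ^d be continuous and continuously differentiable in x. Assume the continuity equation ∂_t p(t,x) = − div_x( p(t,·) v(t,·) )(x) holds for all (t,x) ∈ [0,T] × ℝ^d. Let Φ : [0,T] → ℝ^d be differentiable with Φ'(t) = v(t, Φ(t)) for all t ∈ [0,T]. Then for every t ∈ [0,T], the function t ↦ log p(t, Φ(t)) is differentiable with derivative d/dt [ log p(t, Φ(t)) ] = − (div_x v(t,·))(Φ(t)). -/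
open MeasureTheory Filter Set

lemma clm_apply_eq_sum {d : ℕ} (L : (Fin d → ℝ) →L[ℝ] ℝ) (w : Fin d → ℝ) :
    L w = ∑ i, w i * L (Pi.single i 1) := by
  have h : w = ∑ i, w i • (Pi.single i 1 : Fin d → ℝ) := by
    funext j
    simp [Finset.sum_apply, Pi.single_apply]
  conv_lhs => rw [h]
  rw [map_sum]
  simp [smul_eq_mul]


/-- **Instantaneous change of variables (differential form)**: along a trajectory `Φ`
of the velocity field `v` of a solution of the continuity equation,
`d/dt log p(t, Φ(t)) = −(div_x v(t,·))(Φ(t))`. -/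
theorem log_density_along_flow {d : ℕ} (T : ℝ) (hT : 0 < T)
    (p : ℝ × (Fin d → ℝ) → ℝ) (v : ℝ × (Fin d → ℝ) → (Fin d → ℝ))
    -- `p` continuously differentiable and positive on `[0,T] × ℝ^d`
    (hp : ContDiff ℝ 1 p) (hppos : ∀ t ∈ Icc (0 : ℝ) T, ∀ x, 0 < p (t, x))
    -- `v` continuous, and continuously differentiable in `x`
    (hv : Continuous v) (hvx : ∀ t ∈ Icc (0 : ℝ) T, ContDiff ℝ 1 fun x => v (t, x))
    -- the continuity equation `∂_t p = −div_x(p v)`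
    (hce : ∀ t ∈ Icc (0 : ℝ) T, ∀ x,
      HasDerivAt (fun s => p (s, x)) (- vdiv (fun y => p (t, y) • v (t, y)) x) t)
    -- `Φ` is a trajectory of the velocity field `v`
    (Φ : ℝ → (Fin d → ℝ))
    (hΦ : ∀ t ∈ Icc (0 : ℝ) T, HasDerivAt Φ (v (t, Φ t)) t) :
    ∀ t ∈ Icc (0 : ℝ) T,
      HasDerivAt (fun s => Real.log (p (s, Φ s))) (- vdiv (fun y => v (t, y)) (Φ t)) t := by
  intro t ht
  set x := Φ t with hx
  have hpd : Differentiable ℝ p := hp.differentiable one_ne_zero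
  have hfp : HasFDerivAt p (fderiv ℝ p (t, x)) (t, x) := (hpd (t, x)).hasFDerivAt
  have hcurve : HasDerivAt (fun s => (s, Φ s)) ((1 : ℝ), v (t, x)) t :=
    HasDerivAt.prodMk (hasDerivAt_id t) (hΦ t ht)
  have hcomp : HasDerivAt (fun s => p (s, Φ s)) (fderiv ℝ p (t, x) (1, v (t, x))) t :=
    hfp.comp_hasDerivAt t hcurve
  -- time partial derivative
  have hslice : HasDerivAt (fun s => p (s, x)) (fderiv ℝ p (t, x) (1, 0)) t := by
    have h1 : HasDerivAt (fun s : ℝ => (s, x)) ((1 : ℝ), (0 : Fin d → ℝ)) t :=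
      HasDerivAt.prodMk (hasDerivAt_id t) (hasDerivAt_const t x)
    exact hfp.comp_hasDerivAt t h1
  have hpt : fderiv ℝ p (t, x) (1, 0) = - vdiv (fun y => p (t, y) • v (t, y)) x :=
    hslice.unique (hce t ht x)
  -- space partial derivative
  have hinc : HasFDerivAt (fun y : Fin d → ℝ => ((t : ℝ), y))
      (ContinuousLinearMap.prod 0 (ContinuousLinearMap.id ℝ (Fin d → ℝ))) x :=
    HasFDerivAt.prodMk (hasFDerivAt_const t x) (hasFDerivAt_id x)
  have hpsx : HasFDerivAt (fun y => p (t, y))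
      ((fderiv ℝ p (t, x)).comp
        (ContinuousLinearMap.prod 0 (ContinuousLinearMap.id ℝ (Fin d → ℝ)))) x :=
    hfp.comp x hinc
  have hpx : ∀ w, fderiv ℝ (fun y => p (t, y)) x w = fderiv ℝ p (t, x) (0, w) := by
    intro w
    rw [hpsx.fderiv]
    rfl
  -- expand vdiv (p • v)
  have hfx : DifferentiableAt ℝ (fun y => p (t, y)) x := hpsx.differentiableAt
  have hgx : DifferentiableAt ℝ (fun y => v (t, y)) x :=
    ((hvx t ht).differentiable one_ne_zero) x
  have hdivexp : vdiv (fun y => p (t, y) • v (t, y)) x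
      = fderiv ℝ (fun y => p (t, y)) x (v (t, x)) + p (t, x) * vdiv (fun y => v (t, y)) x := by
    unfold vdiv
    rw [fderiv_fun_smul hfx hgx]
    simp only [ContinuousLinearMap.add_apply, ContinuousLinearMap.smul_apply,
      ContinuousLinearMap.smulRight_apply, Pi.add_apply, Pi.smul_apply, smul_eq_mul]
    rw [Finset.sum_add_distrib, Finset.mul_sum,
      clm_apply_eq_sum (fderiv ℝ (fun y => p (t, y)) x) (v (t, x)), add_comm]
    congr 1
    exact Finset.sum_congr rfl fun i _ => by ring
  -- total derivative of s ↦ p (s, Φ s)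
  have hD : fderiv ℝ p (t, x) (1, v (t, x)) = -(p (t, x) * vdiv (fun y => v (t, y)) x) := by
    have hsplit : ((1 : ℝ), v (t, x)) = ((1 : ℝ), (0 : Fin d → ℝ)) + ((0 : ℝ), v (t, x)) := by
      simp
    rw [hsplit, map_add, hpt, ← hpx, hdivexp]
    ring
  rw [hD] at hcomp
  have hne : p (t, x) ≠ 0 := (hppos t ht x).ne'
  have hlog := hcomp.log hne
  have : -(p (t, x) * vdiv (fun y => v (t, y)) x) / p (t, x)
      = - vdiv (fun y => v (t, y)) x := by
    field_simp
  rwa [this] at hlog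
end

section
/- Let Γ be a real symmetric positive-definite d×d matrix and β ∈ ℝ^d. Define m(t) = (I − exp(−tΓ)) β, Σ(t) = Γ⁻¹(I − exp(−2tΓ)) + exp(−2tΓ), and the Gaussian density p(t,x) = (2π)^{−d/2} det(Σ(t))^{−1/2} exp( −½ (x − m(t))ᵀ Σ(t)⁻¹ (x − m(t)) ) for t ≥ 0, x ∈ ℝ^d. Then p(0,·) is the standard Gaussian density N(0, I), and for every t > 0 and x ∈ ℝ^d, ∂_t p(t,x) = div_x( y ↦ Γ(y − β) p(t,y) )(x) + Δ_x p(t,x), where Δ_x denotes the Laplacian in x. -/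
open Matrix

/-- Laplacian of a scalar function on `ℝ^d`: `Δp = ∑ i, ∂²p/∂x_i²`. -/
noncomputable def lap {d : ℕ} (p : (Fin d → ℝ) → ℝ) (x : Fin d → ℝ) : ℝ :=
  ∑ i, fderiv ℝ (fun y => fderiv ℝ p y (Pi.single i 1)) x (Pi.single i 1)

set_option linter.dupNamespace false
namespace OUAux
variable {d : ℕ} {U : Matrix (Fin d) (Fin d) ℝ}


noncomputable def Phi (U : Matrix (Fin d) (Fin d) ℝ) (w : Fin d → ℝ) :
    Matrix (Fin d) (Fin d) ℝ := U * Matrix.diagonal w * Uᵀ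


theorem Phi_mul (hU2 : Uᵀ * U = 1) (v w : Fin d → ℝ) :
    Phi U v * Phi U w = Phi U (v * w) := by
  simp only [Phi]
  rw [show U * diagonal v * Uᵀ * (U * diagonal w * Uᵀ)
      = U * diagonal v * (Uᵀ * U) * diagonal w * Uᵀ by noncomm_ring, hU2]
  rw [show U * diagonal v * 1 * diagonal w * Uᵀ
      = U * (diagonal v * diagonal w) * Uᵀ by noncomm_ring,
    Matrix.diagonal_mul_diagonal]
  rfl

theorem Phi_one (hU1 : U * Uᵀ = 1) : Phi U 1 = 1 := by
  rw [Phi, show (diagonal (1 : Fin d → ℝ)) = 1 from Matrix.diagonal_one, Matrix.mul_one, hU1]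

theorem Phi_add (v w : Fin d → ℝ) : Phi U (v + w) = Phi U v + Phi U w := by
  rw [Phi, show diagonal (v + w) = diagonal v + diagonal w from (Matrix.diagonal_add v w).symm, Matrix.mul_add, Matrix.add_mul]; rfl

theorem Phi_sub (v w : Fin d → ℝ) : Phi U (v - w) = Phi U v - Phi U w := by
  rw [Phi, show diagonal (v - w) = diagonal v - diagonal w from (Matrix.diagonal_sub v w).symm, Matrix.mul_sub, Matrix.sub_mul]; rfl

theorem Phi_smul (c : ℝ) (w : Fin d → ℝ) : Phi U (c • w) = c • Phi U w := by
  rw [Phi, Matrix.diagonal_smul, Matrix.mul_smul, Matrix.smul_mul]; rfl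

theorem Phi_transpose (w : Fin d → ℝ) : (Phi U w)ᵀ = Phi U w := by
  simp [Phi, Matrix.transpose_mul, Matrix.diagonal_transpose, Matrix.mul_assoc]

theorem Phi_det (hU1 : U * Uᵀ = 1) (w : Fin d → ℝ) : (Phi U w).det = ∏ i, w i := by
  have h : U.det * Uᵀ.det = 1 := by rw [← Matrix.det_mul, hU1, Matrix.det_one]
  rw [Phi, Matrix.det_mul, Matrix.det_mul, Matrix.det_diagonal]
  linear_combination (∏ i, w i) * h

theorem Phi_trace (hU2 : Uᵀ * U = 1) (w : Fin d → ℝ) :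
    (Phi U w).trace = ∑ i, w i := by
  rw [Phi, Matrix.trace_mul_cycle, hU2, Matrix.one_mul, Matrix.trace_diagonal]

theorem Phi_isUnit (hU1 : U * Uᵀ = 1) (hU2 : Uᵀ * U = 1) : IsUnit U :=
  ⟨⟨U, Uᵀ, hU1, hU2⟩, rfl⟩

theorem Phi_inv (hU1 : U * Uᵀ = 1) (hU2 : Uᵀ * U = 1) {w : Fin d → ℝ}
    (hw : ∀ i, w i ≠ 0) : (Phi U w)⁻¹ = Phi U w⁻¹ := by
  refine Matrix.inv_eq_right_inv ?_
  rw [Phi_mul hU2]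
  have : w * w⁻¹ = 1 := by funext i; exact mul_inv_cancel₀ (hw i)
  rw [this, Phi_one hU1]

theorem Phi_exp (hU1 : U * Uᵀ = 1) (hU2 : Uᵀ * U = 1) (w : Fin d → ℝ) :
    NormedSpace.exp (Phi U w) = Phi U (fun i => Real.exp (w i)) := by
  have hunit : IsUnit U := Phi_isUnit hU1 hU2
  have hinv : U⁻¹ = Uᵀ := Matrix.inv_eq_right_inv hU1
  rw [Phi, ← hinv, Matrix.exp_conj U (diagonal w) hunit, Matrix.exp_diagonal,
    Pi.exp_def, hinv, Phi]
  congr 1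
  ext i
  rw [← Real.exp_eq_exp_ℝ]

theorem Phi_entry (w : Fin d → ℝ) (i j : Fin d) :
    Phi U w i j = ∑ k, U i k * w k * U j k := by
  rw [Phi, Matrix.mul_assoc, Matrix.mul_apply]
  refine Finset.sum_congr rfl fun k _ => ?_
  rw [show (diagonal w * Uᵀ) k j = w k * U j k from by
    rw [Matrix.diagonal_mul]; rfl]
  ring

theorem Phi_hasDerivAt {t : ℝ} {w : ℝ → Fin d → ℝ} {w' : Fin d → ℝ}
    (hw : ∀ k, HasDerivAt (fun s => w s k) (w' k) t) (i j : Fin d) :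
    HasDerivAt (fun s => Phi U (w s) i j) (Phi U w' i j) t := by
  simp only [Phi_entry]
  exact HasDerivAt.fun_sum fun k _ => ((hw k).const_mul (U i k)).mul_const (U j k)

theorem symmDot {A : Matrix (Fin d) (Fin d) ℝ} (hA : Aᵀ = A) (u v : Fin d → ℝ) :
    u ⬝ᵥ (A *ᵥ v) = v ⬝ᵥ (A *ᵥ u) := by
  rw [Matrix.dotProduct_mulVec]
  nth_rewrite 1 [← hA]
  rw [Matrix.vecMul_transpose, dotProduct_comm]



/-- dot product with a fixed vector, as a CLM. -/
noncomputable def dotCLM (u : Fin d → ℝ) : (Fin d → ℝ) →L[ℝ] ℝ :=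
  ∑ i, u i • (ContinuousLinearMap.proj i : (Fin d → ℝ) →L[ℝ] ℝ)

@[simp] theorem dotCLM_apply (u v : Fin d → ℝ) : dotCLM u v = u ⬝ᵥ v := by
  simp [dotCLM, dotProduct, ContinuousLinearMap.sum_apply]

/-- derivative of the affine map `y ↦ (A *ᵥ (y − m)) i`. -/
theorem hasFDerivAt_affine (A : Matrix (Fin d) (Fin d) ℝ) (m : Fin d → ℝ)
    (i : Fin d) (y : Fin d → ℝ) :
    HasFDerivAt (fun y : Fin d → ℝ => (A *ᵥ (y - m)) i) (dotCLM (A i)) y := by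
  have h : ∀ z : Fin d → ℝ, (A *ᵥ (z - m)) i = ∑ j, A i j * (z j - m j) := by
    intro z; simp [Matrix.mulVec, dotProduct]
  simp only [h]
  have hsum : HasFDerivAt (fun z : Fin d → ℝ => ∑ j, A i j * (z j - m j))
      (∑ j, (A i j) • (ContinuousLinearMap.proj j : (Fin d → ℝ) →L[ℝ] ℝ)) y :=
    HasFDerivAt.fun_sum (fun j (_ : j ∈ Finset.univ) =>
      ((hasFDerivAt_apply j y).sub_const (m j)).const_mul (A i j))
  exact hsum

/-- derivative of the quadratic form, for symmetric A. -/
theorem hasFDerivAt_quad {A : Matrix (Fin d) (Fin d) ℝ} (hA : Aᵀ = A)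
    (m : Fin d → ℝ) (y : Fin d → ℝ) :
    HasFDerivAt (fun y : Fin d → ℝ => (y - m) ⬝ᵥ (A *ᵥ (y - m)))
      ((2 : ℝ) • dotCLM (A *ᵥ (y - m))) y := by
  have h : ∀ z : Fin d → ℝ, (z - m) ⬝ᵥ (A *ᵥ (z - m))
      = ∑ i, (z i - m i) * (A *ᵥ (z - m)) i := by
    intro z; simp [dotProduct]
  simp only [h]
  have step : ∀ i ∈ Finset.univ, HasFDerivAt
      (fun z : Fin d → ℝ => (z i - m i) * (A *ᵥ (z - m)) i)
      ((y i - m i) • dotCLM (A i) + ((A *ᵥ (y - m)) i) •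
        (ContinuousLinearMap.proj i : (Fin d → ℝ) →L[ℝ] ℝ)) y := by
    intro i _
    exact ((hasFDerivAt_apply i y).sub_const (m i)).mul (hasFDerivAt_affine A m i y)
  have hsum : HasFDerivAt (fun z : Fin d → ℝ => ∑ i, (z i - m i) * (A *ᵥ (z - m)) i)
      (∑ i, ((y i - m i) • dotCLM (A i) + ((A *ᵥ (y - m)) i) •
        (ContinuousLinearMap.proj i : (Fin d → ℝ) →L[ℝ] ℝ))) y :=
    HasFDerivAt.fun_sum step
  convert hsum using 1
  ext v
  simp only [ContinuousLinearMap.sum_apply, ContinuousLinearMap.add_apply,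
    ContinuousLinearMap.smul_apply, ContinuousLinearMap.coe_smul', Pi.smul_apply,
    dotCLM_apply, ContinuousLinearMap.proj_apply, smul_eq_mul]
  have hsymm : (y - m) ⬝ᵥ (A *ᵥ v) = v ⬝ᵥ (A *ᵥ (y - m)) := by
    rw [Matrix.dotProduct_mulVec]
    nth_rewrite 1 [← hA]
    rw [Matrix.vecMul_transpose, dotProduct_comm]
  have expand1 : (y - m) ⬝ᵥ (A *ᵥ v) = ∑ i, (y i - m i) * (A i ⬝ᵥ v) := by
    simp [dotProduct, Matrix.mulVec, Pi.sub_apply]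
  have expand2 : v ⬝ᵥ (A *ᵥ (y - m)) = ∑ i, (A *ᵥ (y - m)) i * v i := by
    simp [dotProduct, mul_comm]
  calc (2 : ℝ) * ((A *ᵥ (y - m)) ⬝ᵥ v)
      = v ⬝ᵥ (A *ᵥ (y - m)) + v ⬝ᵥ (A *ᵥ (y - m)) := by
        rw [dotProduct_comm]; ring
    _ = (y - m) ⬝ᵥ (A *ᵥ v) + v ⬝ᵥ (A *ᵥ (y - m)) := by rw [hsymm]
    _ = ∑ i, ((y i - m i) * (A i ⬝ᵥ v) + (A *ᵥ (y - m)) i * v i) := by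
        rw [expand1, expand2, Finset.sum_add_distrib]

/-- derivative of the Gaussian density, for symmetric A. -/
theorem hasFDerivAt_gauss {A : Matrix (Fin d) (Fin d) ℝ} (hA : Aᵀ = A)
    (C : ℝ) (m : Fin d → ℝ) (y : Fin d → ℝ) :
    HasFDerivAt (fun y : Fin d → ℝ =>
        C * Real.exp (-(1/2) * ((y - m) ⬝ᵥ (A *ᵥ (y - m)))))
      ((-(C * Real.exp (-(1/2) * ((y - m) ⬝ᵥ (A *ᵥ (y - m)))))) •
        dotCLM (A *ᵥ (y - m))) y := by
  have h1 := ((hasFDerivAt_quad hA m y).const_mul (-(1/2) : ℝ)).exp.const_mul C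
  refine h1.congr_fderiv ?_
  ext v
  simp only [ContinuousLinearMap.smul_apply, dotCLM_apply, smul_eq_mul]
  ring



theorem hasDerivAt_dotQuad {t : ℝ} {z : ℝ → Fin d → ℝ}
    {A : ℝ → Matrix (Fin d) (Fin d) ℝ} {z' : Fin d → ℝ}
    {A' : Matrix (Fin d) (Fin d) ℝ}
    (hz : ∀ i, HasDerivAt (fun s => z s i) (z' i) t)
    (hA : ∀ i j, HasDerivAt (fun s => A s i j) (A' i j) t) :
    HasDerivAt (fun s => z s ⬝ᵥ (A s *ᵥ z s))
      (z' ⬝ᵥ (A t *ᵥ z t) + z t ⬝ᵥ (A' *ᵥ z t) + z t ⬝ᵥ (A t *ᵥ z')) t := by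
  have hfun : ∀ s, z s ⬝ᵥ (A s *ᵥ z s) = ∑ i, z s i * ∑ j, A s i j * z s j := by
    intro s; simp [dotProduct, Matrix.mulVec]
  simp only [hfun]
  have inner : ∀ i, HasDerivAt (fun s => ∑ j, A s i j * z s j)
      ((A' *ᵥ z t) i + (A t *ᵥ z') i) t := by
    intro i
    have h := HasDerivAt.fun_sum (fun j (_ : j ∈ Finset.univ) => (hA i j).mul (hz j))
    have hval : ∑ j, (A' i j * z t j + A t i j * z' j)
        = (A' *ᵥ z t) i + (A t *ᵥ z') i := by
      simp [Matrix.mulVec, dotProduct, Finset.sum_add_distrib]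
    rwa [hval] at h
  have outer := HasDerivAt.fun_sum (fun i (_ : i ∈ Finset.univ) => (hz i).mul (inner i))
  have hval2 : ∑ i, (z' i * (∑ j, A t i j * z t j)
        + z t i * ((A' *ᵥ z t) i + (A t *ᵥ z') i))
      = z' ⬝ᵥ (A t *ᵥ z t) + z t ⬝ᵥ (A' *ᵥ z t) + z t ⬝ᵥ (A t *ᵥ z') := by
    simp only [mul_add, Finset.sum_add_distrib, dotProduct, Matrix.mulVec]
    ring_nf
  rwa [hval2] at outer


/-- eigenvalue flow of the covariance -/
noncomputable def sig (lam : Fin d → ℝ) (s : ℝ) (i : Fin d) : ℝ :=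
  (lam i)⁻¹ * (1 - Real.exp ((-(2*s)) * lam i)) + Real.exp ((-(2*s)) * lam i)

/-- eigenvalue flow of the mean -/
noncomputable def mu (lam : Fin d → ℝ) (s : ℝ) (i : Fin d) : ℝ :=
  1 - Real.exp ((-s) * lam i)

theorem sig_zero (lam : Fin d → ℝ) (i : Fin d) : sig lam 0 i = 1 := by
  simp [sig]

theorem sig_pos {lam : Fin d → ℝ} {i : Fin d} (hl : 0 < lam i) {s : ℝ}
    (hs : 0 ≤ s) : 0 < sig lam s i := by
  have he : Real.exp ((-(2*s)) * lam i) ≤ 1 := by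
    rw [Real.exp_le_one_iff]
    have : 0 ≤ 2 * s * lam i := by positivity
    nlinarith
  have hepos : 0 < Real.exp ((-(2*s)) * lam i) := Real.exp_pos _
  have : 0 ≤ (lam i)⁻¹ * (1 - Real.exp ((-(2*s)) * lam i)) := by
    apply mul_nonneg (by positivity) (by linarith)
  unfold sig; linarith

theorem sig_hasDerivAt {lam : Fin d → ℝ} {i : Fin d} (hl : lam i ≠ 0) (t : ℝ) :
    HasDerivAt (fun s => sig lam s i) (2 - 2 * lam i * sig lam t i) t := by
  have h1 : HasDerivAt (fun s : ℝ => (-(2*s)) * lam i) (-2 * lam i) t := by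
    simpa using (((hasDerivAt_id t).const_mul (2:ℝ)).neg.mul_const (lam i))
  have hE := h1.exp
  have h2 := (((hasDerivAt_const t (1:ℝ)).sub hE).const_mul ((lam i)⁻¹)).add hE
  refine HasDerivAt.congr_deriv (f := fun s => sig lam s i) h2 ?_
  unfold sig
  field_simp
  ring

theorem mu_hasDerivAt (lam : Fin d → ℝ) (i : Fin d) (t : ℝ) :
    HasDerivAt (fun s => mu lam s i) (lam i * Real.exp ((-t) * lam i)) t := by
  have h1 : HasDerivAt (fun s : ℝ => (-s) * lam i) (-(lam i)) t := by
    simpa using (hasDerivAt_id t).neg.mul_const (lam i)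
  have hE := h1.exp
  have h2 := (hasDerivAt_const t (1:ℝ)).sub hE
  refine HasDerivAt.congr_deriv (f := fun s => mu lam s i) h2 ?_
  ring

end OUAux
/-- **Closed-form Gaussian solution of the Ornstein–Uhlenbeck Fokker–Planck equation**:
with `m(t) = (I − e^{−tΓ})β` and `Σ(t) = Γ⁻¹(I − e^{−2tΓ}) + e^{−2tΓ}`, the Gaussian
density `p(t,·) = N(m(t), Σ(t))` starts at the standard Gaussian `N(0, I)` and solves
`∂_t p = div_x(Γ(x − β) p) + Δ_x p` for all `t > 0`. -/
theorem ou_gaussian_solution {d : ℕ} (Γ : Matrix (Fin d) (Fin d) ℝ)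
    (hΓsymm : Γ.IsSymm) (hΓpd : Γ.PosDef) (β : Fin d → ℝ)
    (m : ℝ → Fin d → ℝ) (S : ℝ → Matrix (Fin d) (Fin d) ℝ)
    (hm : ∀ t, m t = ((1 : Matrix (Fin d) (Fin d) ℝ) - NormedSpace.exp ((-t) • Γ)) *ᵥ β)
    (hS : ∀ t, S t = Γ⁻¹ * ((1 : Matrix (Fin d) (Fin d) ℝ)
          - NormedSpace.exp ((-(2 * t)) • Γ)) + NormedSpace.exp ((-(2 * t)) • Γ))
    (p : ℝ → (Fin d → ℝ) → ℝ)
    (hp : ∀ t x, p t x = (2 * Real.pi) ^ (-(d : ℝ) / 2) * (S t).det ^ (-(1 : ℝ) / 2) *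
      Real.exp (-(1 / 2) * ((x - m t) ⬝ᵥ ((S t)⁻¹ *ᵥ (x - m t))))) :
    (∀ x, p 0 x = (2 * Real.pi) ^ (-(d : ℝ) / 2) * Real.exp (-(1 / 2) * (x ⬝ᵥ x)))
      ∧ ∀ t : ℝ, 0 < t → ∀ x,
        HasDerivAt (fun s => p s x)
          (vdiv (fun y => p t y • (Γ *ᵥ (y - β))) x + lap (p t) x) t := by
  classical
  have hΓh : Γ.IsHermitian := hΓpd.1
  set U : Matrix (Fin d) (Fin d) ℝ :=
    (hΓh.eigenvectorUnitary : Matrix (Fin d) (Fin d) ℝ) with hUdef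
  set lam : Fin d → ℝ := hΓh.eigenvalues with hlamdef
  have hstar : star U = Uᵀ := by
    rw [Matrix.star_eq_conjTranspose, Matrix.conjTranspose_eq_transpose_of_trivial]
  have hU1 : U * Uᵀ = 1 := by
    rw [← hstar]; exact Matrix.mem_unitaryGroup_iff.mp (hΓh.eigenvectorUnitary).2
  have hU2 : Uᵀ * U = 1 := by
    rw [← hstar]; exact Matrix.mem_unitaryGroup_iff'.mp (hΓh.eigenvectorUnitary).2
  have hGamma : Γ = OUAux.Phi U lam := by
    have h := hΓh.spectral_theorem
    have hco : RCLike.ofReal ∘ hΓh.eigenvalues = lam := by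
      funext i
      simp [hlamdef, RCLike.ofReal_real_eq_id]
    rw [h, Unitary.conjStarAlgAut_apply, hstar, hco]
    rfl
  have hlampos : ∀ i, 0 < lam i := fun i => hΓpd.eigenvalues_pos i
  have hlamne : ∀ i, lam i ≠ 0 := fun i => ne_of_gt (hlampos i)
  have hexpc : ∀ c : ℝ, NormedSpace.exp (c • Γ)
      = OUAux.Phi U (fun i => Real.exp (c * lam i)) := by
    intro c
    rw [hGamma, ← OUAux.Phi_smul, OUAux.Phi_exp hU1 hU2]
    rfl
  have hGinv : Γ⁻¹ = OUAux.Phi U lam⁻¹ := by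
    rw [hGamma, OUAux.Phi_inv hU1 hU2 hlamne]
  have hSrep : ∀ s, S s = OUAux.Phi U (OUAux.sig lam s) := by
    intro s
    rw [hS s, hexpc (-(2*s)), hGinv,
      show (1 : Matrix (Fin d) (Fin d) ℝ)
          - OUAux.Phi U (fun i => Real.exp (-(2*s) * lam i))
          = OUAux.Phi U (1 - fun i => Real.exp (-(2*s) * lam i)) from by
        rw [OUAux.Phi_sub, OUAux.Phi_one hU1],
      OUAux.Phi_mul hU2, ← OUAux.Phi_add]
    have hfe : (lam⁻¹ * (1 - fun i => Real.exp (-(2 * s) * lam i))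
        + fun i => Real.exp (-(2 * s) * lam i)) = OUAux.sig lam s := by
      funext i; simp [OUAux.sig]
    rw [hfe]
  have hdet : ∀ s, (S s).det = ∏ i, OUAux.sig lam s i := by
    intro s; rw [hSrep s, OUAux.Phi_det hU1]
  have hAinv : ∀ s : ℝ, 0 ≤ s →
      (S s)⁻¹ = OUAux.Phi U (fun i => (OUAux.sig lam s i)⁻¹) := by
    intro s hs
    rw [hSrep s, OUAux.Phi_inv hU1 hU2
      (fun i => ne_of_gt (OUAux.sig_pos (hlampos i) hs))]
    rfl
  have hmrep : ∀ s, m s = OUAux.Phi U (OUAux.mu lam s) *ᵥ β := by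
    intro s
    rw [hm s, hexpc (-s),
      show (1 : Matrix (Fin d) (Fin d) ℝ)
          - OUAux.Phi U (fun i => Real.exp (-s * lam i))
          = OUAux.Phi U (1 - fun i => Real.exp (-s * lam i)) from by
        rw [OUAux.Phi_sub, OUAux.Phi_one hU1]]
    have hfe : (1 - fun i => Real.exp (-s * lam i)) = OUAux.mu lam s := by
      funext i; simp [OUAux.mu]
    rw [hfe]
  constructor
  · intro x
    have h0 : OUAux.sig lam 0 = 1 := by funext i; exact OUAux.sig_zero lam i
    have hS0 : S 0 = 1 := by rw [hSrep 0, h0, OUAux.Phi_one hU1]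
    have hm0 : m 0 = 0 := by
      rw [hm 0, show ((-(0:ℝ)) • Γ) = (0 : Matrix (Fin d) (Fin d) ℝ) by simp,
        NormedSpace.exp_zero, sub_self, Matrix.zero_mulVec]
    rw [hp 0 x, hS0, hm0, Matrix.det_one, inv_one, Matrix.one_mulVec,
      sub_zero, Real.one_rpow, mul_one]
  · intro t ht x
    have hσ' : ∀ i, HasDerivAt (fun s => OUAux.sig lam s i)
        (2 - 2 * lam i * OUAux.sig lam t i) t :=
      fun i => OUAux.sig_hasDerivAt (hlamne i) t
    have hσpos : ∀ i, 0 < OUAux.sig lam t i :=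
      fun i => OUAux.sig_pos (hlampos i) ht.le
    have hσne : ∀ i, OUAux.sig lam t i ≠ 0 := fun i => ne_of_gt (hσpos i)
    have hA : (S t)⁻¹ = OUAux.Phi U (fun i => (OUAux.sig lam t i)⁻¹) := hAinv t ht.le
    have hAsymm : ((S t)⁻¹)ᵀ = (S t)⁻¹ := by rw [hA]; exact OUAux.Phi_transpose _
    have hΓT : Γᵀ = Γ := hΓsymm
    have hDpos : 0 < (S t).det := by
      rw [hdet t]; exact Finset.prod_pos fun i _ => hσpos i
    have hDne : (S t).det ≠ 0 := ne_of_gt hDpos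
    -- trace identities
    have htrA : (∑ i, (S t)⁻¹ i i) = ∑ i, (OUAux.sig lam t i)⁻¹ := by
      have h := OUAux.Phi_trace hU2 (U := U) (fun i => (OUAux.sig lam t i)⁻¹)
      rw [hA]
      simpa [Matrix.trace, Matrix.diag] using h
    have htrG : (∑ i, Γ i i) = ∑ i, lam i := by
      have h := OUAux.Phi_trace hU2 (U := U) lam
      rw [hGamma]
      simpa [Matrix.trace, Matrix.diag] using h
    ------------------------------------------------------------------
    -- SPACE SIDE
    ------------------------------------------------------------------
    have hpfun : ∀ y, p t y = ((2 * Real.pi) ^ (-(d : ℝ) / 2) * (S t).det ^ (-(1 : ℝ) / 2))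
        * Real.exp (-(1 / 2) * ((y - m t) ⬝ᵥ ((S t)⁻¹ *ᵥ (y - m t)))) := fun y => hp t y
    have hptderiv : ∀ y, HasFDerivAt (p t)
        ((-(p t y)) • OUAux.dotCLM ((S t)⁻¹ *ᵥ (y - m t))) y := by
      intro y
      have h := OUAux.hasFDerivAt_gauss hAsymm
        ((2 * Real.pi) ^ (-(d : ℝ) / 2) * (S t).det ^ (-(1 : ℝ) / 2)) (m t) y
      have hfun : (fun u => ((2 * Real.pi) ^ (-(d : ℝ) / 2) * (S t).det ^ (-(1 : ℝ) / 2))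
          * Real.exp (-(1 / 2) * ((u - m t) ⬝ᵥ ((S t)⁻¹ *ᵥ (u - m t))))) = p t := by
        funext u; rw [hpfun u]
      rw [hfun] at h
      rw [hpfun y]
      exact h
    have hfderiv : ∀ y, fderiv ℝ (p t) y
        = (-(p t y)) • OUAux.dotCLM ((S t)⁻¹ *ᵥ (y - m t)) := fun y => (hptderiv y).fderiv
    have hlap : lap (p t) x
        = p t x * (((S t)⁻¹ *ᵥ (x - m t)) ⬝ᵥ ((S t)⁻¹ *ᵥ (x - m t)))
          - p t x * (∑ i, (S t)⁻¹ i i) := by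
      have hterm : ∀ i : Fin d,
          fderiv ℝ (fun y => fderiv ℝ (p t) y (Pi.single i 1)) x (Pi.single i 1)
          = p t x * (((S t)⁻¹ *ᵥ (x - m t)) i * ((S t)⁻¹ *ᵥ (x - m t)) i)
            - p t x * (S t)⁻¹ i i := by
        intro i
        have hfun2 : (fun y => fderiv ℝ (p t) y (Pi.single i 1))
            = fun y => -(p t y * ((S t)⁻¹ *ᵥ (y - m t)) i) := by
          funext y
          rw [hfderiv y]
          simp [OUAux.dotCLM_apply, dotProduct_single]
        have hder : HasFDerivAt (fun y => -(p t y * ((S t)⁻¹ *ᵥ (y - m t)) i))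
            (-((p t x) • OUAux.dotCLM ((S t)⁻¹ i)
              + (((S t)⁻¹ *ᵥ (x - m t)) i) •
                ((-(p t x)) • OUAux.dotCLM ((S t)⁻¹ *ᵥ (x - m t))))) x :=
          ((hptderiv x).mul (OUAux.hasFDerivAt_affine (S t)⁻¹ (m t) i x)).neg
        rw [hfun2, hder.fderiv]
        simp only [ContinuousLinearMap.neg_apply, ContinuousLinearMap.add_apply,
          ContinuousLinearMap.smul_apply, OUAux.dotCLM_apply, smul_eq_mul,
          dotProduct_single, mul_one]
        ring
      unfold lap
      rw [Finset.sum_congr rfl fun i _ => hterm i, Finset.sum_sub_distrib,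
        ← Finset.mul_sum, ← Finset.mul_sum]
      rfl
    have hvdiv : vdiv (fun y => p t y • (Γ *ᵥ (y - β))) x
        = p t x * (∑ i, Γ i i)
          - p t x * (((S t)⁻¹ *ᵥ (x - m t)) ⬝ᵥ (Γ *ᵥ (x - β))) := by
      have hFd : HasFDerivAt (fun y => p t y • (Γ *ᵥ (y - β)))
          (ContinuousLinearMap.pi (fun i => (p t x) • OUAux.dotCLM (Γ i)
            + ((Γ *ᵥ (x - β)) i) •
              ((-(p t x)) • OUAux.dotCLM ((S t)⁻¹ *ᵥ (x - m t))))) x := by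
        apply hasFDerivAt_pi''
        intro i
        rw [ContinuousLinearMap.proj_pi]
        exact (hptderiv x).mul (OUAux.hasFDerivAt_affine Γ β i x)
      unfold vdiv
      rw [hFd.fderiv]
      have hterm : ∀ i : Fin d,
          (ContinuousLinearMap.pi (fun i => (p t x) • OUAux.dotCLM (Γ i)
            + ((Γ *ᵥ (x - β)) i) •
              ((-(p t x)) • OUAux.dotCLM ((S t)⁻¹ *ᵥ (x - m t))))) (Pi.single i 1) i
          = p t x * Γ i i
            + (-(p t x * (((S t)⁻¹ *ᵥ (x - m t)) i * (Γ *ᵥ (x - β)) i))) := by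
        intro i
        rw [ContinuousLinearMap.pi_apply]
        simp only [ContinuousLinearMap.add_apply, ContinuousLinearMap.smul_apply,
          OUAux.dotCLM_apply, smul_eq_mul, dotProduct_single, mul_one]
        ring
      rw [Finset.sum_congr rfl fun i _ => hterm i, Finset.sum_add_distrib,
        ← Finset.mul_sum]
      have h2 : (∑ i, -(p t x * (((S t)⁻¹ *ᵥ (x - m t)) i * (Γ *ᵥ (x - β)) i)))
          = -(p t x * (((S t)⁻¹ *ᵥ (x - m t)) ⬝ᵥ (Γ *ᵥ (x - β)))) := by
        rw [show ((S t)⁻¹ *ᵥ (x - m t)) ⬝ᵥ (Γ *ᵥ (x - β))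
            = ∑ i, ((S t)⁻¹ *ᵥ (x - m t)) i * (Γ *ᵥ (x - β)) i from rfl,
          Finset.mul_sum, ← Finset.sum_neg_distrib]
      rw [h2]
      ring
    ------------------------------------------------------------------
    -- TIME SIDE
    ------------------------------------------------------------------
    have hDder : HasDerivAt (fun s => (S s).det)
        (2 * (∏ i, OUAux.sig lam t i) * (∑ i, (OUAux.sig lam t i)⁻¹)
          - 2 * (∏ i, OUAux.sig lam t i) * (∑ i, lam i)) t := by
      have hfun : (fun s => (S s).det) = fun s => ∏ i, OUAux.sig lam s i := funext hdet
      rw [hfun]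
      have h := HasDerivAt.fun_finsetProd (u := Finset.univ)
        (f := fun i s => OUAux.sig lam s i)
        (f' := fun i => 2 - 2 * lam i * OUAux.sig lam t i) (fun i _ => hσ' i)
      refine h.congr_deriv (Eq.symm ?_)
      rw [eq_comm]
      have hterm : ∀ i : Fin d, (∏ j ∈ Finset.univ.erase i, OUAux.sig lam t j)
            • (2 - 2 * lam i * OUAux.sig lam t i)
          = 2 * (∏ j, OUAux.sig lam t j) * (OUAux.sig lam t i)⁻¹
            - 2 * (∏ j, OUAux.sig lam t j) * lam i := by
        intro i
        have he : (∏ j ∈ Finset.univ.erase i, OUAux.sig lam t j) * OUAux.sig lam t i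
            = ∏ j, OUAux.sig lam t j :=
          Finset.prod_erase_mul _ _ (Finset.mem_univ i)
        have hE : (∏ j ∈ Finset.univ.erase i, OUAux.sig lam t j)
            = (∏ j, OUAux.sig lam t j) * (OUAux.sig lam t i)⁻¹ := by
          rw [← he, mul_assoc, mul_inv_cancel₀ (hσne i), mul_one]
        rw [smul_eq_mul, hE]
        have hcan := mul_inv_cancel₀ (hσne i)
        field_simp
        linear_combination (-lam i * (∏ j, OUAux.sig lam t j)) * hcan
      rw [Finset.sum_congr rfl fun i _ => hterm i, Finset.sum_sub_distrib,
        ← Finset.mul_sum, ← Finset.mul_sum]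
    have hmder : ∀ i, HasDerivAt (fun s => m s i) ((Γ *ᵥ (β - m t)) i) t := by
      intro i
      have hfun : (fun s => m s i)
          = fun s => ∑ j, OUAux.Phi U (OUAux.mu lam s) i j * β j := by
        funext s; rw [hmrep s]; rfl
      rw [hfun]
      have hder : HasDerivAt (fun s => ∑ j, OUAux.Phi U (OUAux.mu lam s) i j * β j)
          (∑ j, OUAux.Phi U (fun j => lam j * Real.exp ((-t) * lam j)) i j * β j) t :=
        HasDerivAt.fun_sum (fun j (_ : j ∈ Finset.univ) =>
          (OUAux.Phi_hasDerivAt (fun k => OUAux.mu_hasDerivAt lam k t) i j).mul_const (β j))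
      have hid : Γ *ᵥ (β - m t)
          = OUAux.Phi U (fun j => lam j * Real.exp ((-t) * lam j)) *ᵥ β := by
        have h1 : β - m t = OUAux.Phi U (fun i => Real.exp ((-t) * lam i)) *ᵥ β := by
          rw [hmrep t,
            show β - OUAux.Phi U (OUAux.mu lam t) *ᵥ β
                = ((1 : Matrix (Fin d) (Fin d) ℝ) - OUAux.Phi U (OUAux.mu lam t)) *ᵥ β
              from by rw [Matrix.sub_mulVec, Matrix.one_mulVec],
            show (1 : Matrix (Fin d) (Fin d) ℝ) - OUAux.Phi U (OUAux.mu lam t)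
                = OUAux.Phi U (1 - OUAux.mu lam t)
              from by rw [OUAux.Phi_sub, OUAux.Phi_one hU1],
            show (1 - OUAux.mu lam t) = fun i => Real.exp ((-t) * lam i)
              from by funext i; simp [OUAux.mu]]
        rw [h1, hGamma, Matrix.mulVec_mulVec, OUAux.Phi_mul hU2]
        congr 1
      rw [hid]
      exact hder
    have hz' : ∀ i, HasDerivAt (fun s => (x - m s) i) ((-(Γ *ᵥ (β - m t))) i) t := by
      intro i
      have h := (hasDerivAt_const t (x i)).sub (hmder i)
      refine h.congr_deriv ?_
      simp
    have hAder : ∀ i j, HasDerivAt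
        (fun s => OUAux.Phi U (fun k => (OUAux.sig lam s k)⁻¹) i j)
        (OUAux.Phi U (fun k =>
          -(2 - 2 * lam k * OUAux.sig lam t k) / (OUAux.sig lam t k)^2) i j) t :=
      fun i j => OUAux.Phi_hasDerivAt (fun k => (hσ' k).inv (hσne k)) i j
    have hq0 : HasDerivAt
        (fun s => (x - m s) ⬝ᵥ (OUAux.Phi U (fun k => (OUAux.sig lam s k)⁻¹) *ᵥ (x - m s)))
        ((-(Γ *ᵥ (β - m t))) ⬝ᵥ (OUAux.Phi U (fun k => (OUAux.sig lam t k)⁻¹) *ᵥ (x - m t))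
          + (x - m t) ⬝ᵥ (OUAux.Phi U (fun k =>
              -(2 - 2 * lam k * OUAux.sig lam t k) / (OUAux.sig lam t k)^2) *ᵥ (x - m t))
          + (x - m t) ⬝ᵥ (OUAux.Phi U (fun k => (OUAux.sig lam t k)⁻¹)
              *ᵥ (-(Γ *ᵥ (β - m t))))) t :=
      OUAux.hasDerivAt_dotQuad hz' hAder
    rw [← hA] at hq0
    have hqev : (fun s => (x - m s) ⬝ᵥ (OUAux.Phi U (fun k => (OUAux.sig lam s k)⁻¹) *ᵥ (x - m s)))
        =ᶠ[nhds t] (fun s => (x - m s) ⬝ᵥ ((S s)⁻¹ *ᵥ (x - m s))) := by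
      filter_upwards [lt_mem_nhds ht] with s hs
      rw [hAinv s hs.le]
    have hq := hq0.congr_of_eventuallyEq hqev.symm
    -- the A' identity
    have hA'eq : OUAux.Phi U (fun k =>
          -(2 - 2 * lam k * OUAux.sig lam t k) / (OUAux.sig lam t k)^2)
        = (2:ℝ) • (Γ * (S t)⁻¹) - (2:ℝ) • ((S t)⁻¹ * (S t)⁻¹) := by
      rw [hA, hGamma, OUAux.Phi_mul hU2, OUAux.Phi_mul hU2,
        ← OUAux.Phi_smul, ← OUAux.Phi_smul, ← OUAux.Phi_sub]
      apply congrArg (OUAux.Phi U)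
      funext k
      show -(2 - 2 * lam k * OUAux.sig lam t k) / (OUAux.sig lam t k)^2
          = 2 * (lam k * (OUAux.sig lam t k)⁻¹)
            - 2 * ((OUAux.sig lam t k)⁻¹ * (OUAux.sig lam t k)⁻¹)
      have h1 := hσne k
      field_simp
      ring
    ------------------------------------------------------------------
    -- ASSEMBLY
    ------------------------------------------------------------------
    rw [hvdiv, hlap, htrA, htrG]
    have hfun : (fun s => p s x) = fun s =>
        ((2 * Real.pi) ^ (-(d : ℝ) / 2) * (S s).det ^ (-(1 : ℝ) / 2))
        * Real.exp (-(1 / 2) * ((x - m s) ⬝ᵥ ((S s)⁻¹ *ᵥ (x - m s)))) := by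
      funext s; rw [hp s x]
    rw [hfun]
    have hc : HasDerivAt
        (fun s => (2 * Real.pi) ^ (-(d : ℝ) / 2) * (S s).det ^ (-(1 : ℝ) / 2))
        ((2 * Real.pi) ^ (-(d : ℝ) / 2) *
          ((2 * (∏ i, OUAux.sig lam t i) * (∑ i, (OUAux.sig lam t i)⁻¹)
          - 2 * (∏ i, OUAux.sig lam t i) * (∑ i, lam i)) * (-(1 : ℝ) / 2)
            * (S t).det ^ ((-(1 : ℝ) / 2) - 1))) t :=
      (hDder.rpow_const (Or.inl hDne)).const_mul _
    have he := (hq.const_mul (-(1/2) : ℝ)).exp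
    have hmul := hc.mul he
    refine hmul.congr_deriv (Eq.symm ?_)
    -- final scalar identity
    have hW := hp t x
    set W : Fin d → ℝ := (S t)⁻¹ *ᵥ (x - m t) with hWdef
    set X : ℝ := Real.exp (-(1 / 2) * ((x - m t) ⬝ᵥ ((S t)⁻¹ *ᵥ (x - m t)))) with hXdef
    -- quadratic derivative identity
    have hhalf : -(1/2 : ℝ) *
        ((-(Γ *ᵥ (β - m t))) ⬝ᵥ ((S t)⁻¹ *ᵥ (x - m t))
          + (x - m t) ⬝ᵥ (OUAux.Phi U (fun k =>
              -(2 - 2 * lam k * OUAux.sig lam t k) / (OUAux.sig lam t k)^2) *ᵥ (x - m t))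
          + (x - m t) ⬝ᵥ ((S t)⁻¹ *ᵥ (-(Γ *ᵥ (β - m t)))))
        = W ⬝ᵥ W - W ⬝ᵥ (Γ *ᵥ (x - β)) := by
      have e2 : (x - m t) ⬝ᵥ ((S t)⁻¹ *ᵥ (-(Γ *ᵥ (β - m t))))
          = -((Γ *ᵥ (β - m t)) ⬝ᵥ W) := by
        rw [Matrix.mulVec_neg, dotProduct_neg, OUAux.symmDot hAsymm]
      have e3 : (x - m t) ⬝ᵥ (OUAux.Phi U (fun k =>
            -(2 - 2 * lam k * OUAux.sig lam t k) / (OUAux.sig lam t k)^2) *ᵥ (x - m t))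
          = 2 * (W ⬝ᵥ (Γ *ᵥ (x - m t))) - 2 * (W ⬝ᵥ W) := by
        rw [hA'eq, Matrix.sub_mulVec, Matrix.smul_mulVec, Matrix.smul_mulVec,
          dotProduct_sub, dotProduct_smul, dotProduct_smul,
          ← Matrix.mulVec_mulVec, ← Matrix.mulVec_mulVec]
        rw [show (x - m t) ⬝ᵥ (Γ *ᵥ ((S t)⁻¹ *ᵥ (x - m t)))
            = W ⬝ᵥ (Γ *ᵥ (x - m t)) from OUAux.symmDot hΓT _ _]
        rw [show (x - m t) ⬝ᵥ ((S t)⁻¹ *ᵥ ((S t)⁻¹ *ᵥ (x - m t)))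
            = W ⬝ᵥ W from by rw [OUAux.symmDot hAsymm]]
        simp [smul_eq_mul]
      have e1 : (-(Γ *ᵥ (β - m t))) ⬝ᵥ ((S t)⁻¹ *ᵥ (x - m t))
          = -((Γ *ᵥ (β - m t)) ⬝ᵥ W) := by
        rw [neg_dotProduct, hWdef]
      have e5 : W ⬝ᵥ (Γ *ᵥ (x - β))
          = W ⬝ᵥ (Γ *ᵥ (x - m t)) - W ⬝ᵥ (Γ *ᵥ (β - m t)) := by
        rw [show (x - β) = (x - m t) - (β - m t) from by abel, Matrix.mulVec_sub,
          dotProduct_sub]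
      have e4 : (Γ *ᵥ (β - m t)) ⬝ᵥ W = W ⬝ᵥ (Γ *ᵥ (β - m t)) :=
        dotProduct_comm _ _
      rw [e1, e2, e3, e5, e4]
      ring
    -- determinant derivative identity
    have hpow : (S t).det ^ ((-(1 : ℝ) / 2) - 1) = (S t).det ^ (-(1 : ℝ) / 2) / (S t).det := by
      rw [Real.rpow_sub hDpos, Real.rpow_one]
    rw [hp t x, ← hXdef, hhalf, hpow, hdet t]
    have hprodne : (∏ i, OUAux.sig lam t i) ≠ 0 :=
      ne_of_gt (Finset.prod_pos fun i _ => hσpos i)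
    have hPinv : (∏ i, OUAux.sig lam t i) * (∏ i, OUAux.sig lam t i)⁻¹ = 1 :=
      mul_inv_cancel₀ hprodne
    generalize hc0 : (2 * Real.pi) ^ (-(d:ℝ) / 2) = c0
    generalize hR : (∏ i, OUAux.sig lam t i) ^ (-(1:ℝ) / 2) = R
    linear_combination (-(c0 * R * X *
      ((∑ i, lam i) - ∑ i, (OUAux.sig lam t i)⁻¹))) * hPinv
end
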